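/- arXiv:2501.05660 — 2 statements merged into one kernel-verified Lean document; each statement's English description precedes it below -/
import Mathlib

section
/- In the limit λ_{-r} → ∞ (holding λ_r, μ₀, μ fixed and p ∈ (0,1]), the red-task average AoI Δ_r(p, μ₀) converges to (λ_r p + μ₀)/(λ_r p μ₀), the average AoI of a single M/M/1 LCFS-preemptive server with arrival rate λ_r p and service rate μ₀. -/
open Filter

/-- As the exogenous red load `λ_{-r} → ∞`, the red-task average AoI converges to
`(λ_r p + μ₀)/(λ_r p μ₀)`, the AoI of a single M/M/1 LCFS-preemptive server
with arrival rate `λ_r p` and service rate `μ₀`. -/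
theorem red_aoi_saturation_limit (lam_r mu0 mu p : ℝ)
    (hlr : 0 < lam_r) (hmu0 : 0 < mu0) (hmu : 0 < mu)
    (hp : p ∈ Set.Ioc (0:ℝ) 1) :
    Tendsto (fun lam_mr : ℝ =>
      (mu0 * (lam_mr + mu) * (lam_mr + mu + mu0)
          + lam_r ^ 3 * p * (1 - p)
          + lam_r ^ 2 * (mu + mu0 + lam_mr * p * (2 - p))
          + lam_r * ((mu + mu0) ^ 2 + lam_mr ^ 2 * p + lam_mr * (mu * (1 + p) + 2 * mu0)))
        / (lam_r * (mu + (lam_r + lam_mr) * p)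
            * (mu0 * (lam_mr + mu + mu0) + lam_r * (mu + mu0) * (1 - p))))
      atTop (nhds ((lam_r * p + mu0) / (lam_r * p * mu0))) := by
  obtain ⟨hp0, hp1⟩ := hp
  set N : ℝ → ℝ := fun t =>
      mu0 * (1 + mu * t) * (1 + (mu + mu0) * t) + lam_r ^ 3 * p * (1 - p) * t ^ 2
        + lam_r ^ 2 * ((mu + mu0) * t ^ 2 + p * (2 - p) * t)
        + lam_r * ((mu + mu0) ^ 2 * t ^ 2 + p + (mu * (1 + p) + 2 * mu0) * t) with hNdef
  set D : ℝ → ℝ := fun t =>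
      lam_r * (mu * t + (lam_r * t + 1) * p)
        * (mu0 * (1 + (mu + mu0) * t) + lam_r * (mu + mu0) * (1 - p) * t) with hDdef
  have hD0 : D 0 ≠ 0 := by
    simp only [hDdef, mul_zero, zero_add, add_zero, mul_one, zero_mul, one_mul]
    positivity
  have hcont : ContinuousAt (fun t => N t / D t) 0 := by
    apply ContinuousAt.div
    · fun_prop
    · fun_prop
    · exact hD0
  have hval : N 0 / D 0 = (lam_r * p + mu0) / (lam_r * p * mu0) := by
    simp only [hNdef, hDdef]
    norm_num
    ring_nf
  have hN : Tendsto (fun x : ℝ => N x⁻¹ / D x⁻¹) atTop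
      (nhds ((lam_r * p + mu0) / (lam_r * p * mu0))) := by
    rw [← hval]
    exact (hcont.tendsto).comp tendsto_inv_atTop_zero
  refine hN.congr' ?_
  filter_upwards [eventually_gt_atTop (0 : ℝ)] with x hx
  have hx0 : x ≠ 0 := ne_of_gt hx
  have hx2 : (x : ℝ) ^ 2 ≠ 0 := pow_ne_zero _ hx0
  have hNeq : N x⁻¹ = (mu0 * (x + mu) * (x + mu + mu0)
          + lam_r ^ 3 * p * (1 - p)
          + lam_r ^ 2 * (mu + mu0 + x * p * (2 - p))
          + lam_r * ((mu + mu0) ^ 2 + x ^ 2 * p + x * (mu * (1 + p) + 2 * mu0))) / x ^ 2 := by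
    simp only [hNdef]
    field_simp
    ring
  have hDeq : D x⁻¹ = (lam_r * (mu + (lam_r + x) * p)
            * (mu0 * (x + mu + mu0) + lam_r * (mu + mu0) * (1 - p))) / x ^ 2 := by
    simp only [hDdef]
    field_simp
    ring
  rw [hNeq, hDeq, div_div_div_cancel_right₀ hx2]
end

section
/- For fixed λ_r > 0, λ_{-r} ≥ 0, μ > 0, and p ∈ [0,1], the red-task average AoI Δ_r(p, μ₀) is nonincreasing in μ₀ on (0, ∞) when λ_{-r} = 0; i.e., with no edge-server interference, increasing the local service rate never increases the average AoI. -/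
/-- With no edge-server interference (`λ_{-r} = 0`), the red-task average AoI is
nonincreasing in the local service rate `μ₀` on `(0,∞)`. -/
theorem red_aoi_antitone_in_mu0 (lam_r mu p : ℝ)
    (hlr : 0 < lam_r) (hmu : 0 < mu) (hp : p ∈ Set.Icc (0:ℝ) 1) :
    AntitoneOn (fun mu0 : ℝ =>
      (mu0 * mu * (mu + mu0)
          + lam_r ^ 3 * p * (1 - p)
          + lam_r ^ 2 * (mu + mu0)
          + lam_r * (mu + mu0) ^ 2)
        / (lam_r * (mu + lam_r * p)
            * (mu0 * (mu + mu0) + lam_r * (mu + mu0) * (1 - p))))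
      (Set.Ioi (0:ℝ)) := by
  obtain ⟨hp0, hp1⟩ := hp
  intro a ha b hb hab
  simp only [Set.mem_Ioi] at ha hb
  have hq : 0 ≤ 1 - p := by linarith
  have hC : 0 < lam_r * (mu + lam_r * p) := by
    have : 0 < mu + lam_r * p := by nlinarith
    positivity
  have hDa : 0 < a * (mu + a) + lam_r * (mu + a) * (1 - p) := by
    have h1 : 0 < a * (mu + a) := by positivity
    have h2 : 0 ≤ lam_r * (mu + a) * (1 - p) := by
      have : 0 < mu + a := by linarith
      positivity
    linarith
  have hDb : 0 < b * (mu + b) + lam_r * (mu + b) * (1 - p) := by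
    have h1 : 0 < b * (mu + b) := by positivity
    have h2 : 0 ≤ lam_r * (mu + b) * (1 - p) := by
      have : 0 < mu + b := by linarith
      positivity
    linarith
  have hda : 0 < lam_r * (mu + lam_r * p)
      * (a * (mu + a) + lam_r * (mu + a) * (1 - p)) := mul_pos hC hDa
  have hdb : 0 < lam_r * (mu + lam_r * p)
      * (b * (mu + b) + lam_r * (mu + b) * (1 - p)) := mul_pos hC hDb
  rw [div_le_div_iff₀ hdb hda]
  have hba : 0 ≤ b - a := by linarith
  have key : (b * mu * (mu + b) + lam_r ^ 3 * p * (1 - p) + lam_r ^ 2 * (mu + b)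
        + lam_r * (mu + b) ^ 2) * (a * (mu + a) + lam_r * (mu + a) * (1 - p))
      ≤ (a * mu * (mu + a) + lam_r ^ 3 * p * (1 - p) + lam_r ^ 2 * (mu + a)
        + lam_r * (mu + a) ^ 2) * (b * (mu + b) + lam_r * (mu + b) * (1 - p)) := by
    have t1 : 0 ≤ lam_r * (mu + lam_r) * p * ((mu + a) * ((mu + b) * (b - a))) := by
      have : 0 < mu + lam_r := by linarith
      have h2 : 0 < mu + a := by linarith
      have h3 : 0 < mu + b := by linarith
      positivity
    have t2 : 0 ≤ lam_r ^ 3 * p * (1 - p) * ((b - a) * (a + b + mu + lam_r * (1 - p))) := by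
      have : 0 ≤ a + b + mu + lam_r * (1 - p) := by nlinarith
      positivity
    nlinarith [t1, t2]
  calc (b * mu * (mu + b) + lam_r ^ 3 * p * (1 - p) + lam_r ^ 2 * (mu + b)
        + lam_r * (mu + b) ^ 2) * (lam_r * (mu + lam_r * p)
          * (a * (mu + a) + lam_r * (mu + a) * (1 - p)))
      = lam_r * (mu + lam_r * p) * ((b * mu * (mu + b) + lam_r ^ 3 * p * (1 - p)
          + lam_r ^ 2 * (mu + b) + lam_r * (mu + b) ^ 2)
          * (a * (mu + a) + lam_r * (mu + a) * (1 - p))) := by ring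
    _ ≤ lam_r * (mu + lam_r * p) * ((a * mu * (mu + a) + lam_r ^ 3 * p * (1 - p)
          + lam_r ^ 2 * (mu + a) + lam_r * (mu + a) ^ 2)
          * (b * (mu + b) + lam_r * (mu + b) * (1 - p))) :=
        mul_le_mul_of_nonneg_left key hC.le
    _ = (a * mu * (mu + a) + lam_r ^ 3 * p * (1 - p) + lam_r ^ 2 * (mu + a)
        + lam_r * (mu + a) ^ 2) * (lam_r * (mu + lam_r * p)
          * (b * (mu + b) + lam_r * (mu + b) * (1 - p))) := by ring
end
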